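/- Let P be a finite set of positive integers, m = min P, n > m, and Q = {p - m : p ∈ P, p ≠ m} ∪ {m}. Then FW(P,n) is determined by the recursion: FW(P,n)[i] = FW(Q, n-m)[i mod m] if (i mod m) < n - m, and FW(P,n)[i] = i mod m otherwise. -/

import Mathlib

noncomputable def mP (P : Finset ℕ) : ℕ := sInf (↑P : Set ℕ)

def simRel (P : Finset ℕ) (k i j : ℕ) : Prop :=
  i < k ∧ j < k ∧ (i % mP P = j % mP P ∨
    ∃ i' j', i' < k ∧ j' < k ∧ i' % mP P = i % mP P ∧ j' % mP P = j % mP P ∧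
      (max i' j' - min i' j') ∈ P)

def cls (P : Finset ℕ) (k i : ℕ) : Set ℕ := {j | Relation.EqvGen (simRel P k) i j}

noncomputable def FW (P : Finset ℕ) (k : ℕ) : ℕ → ℕ := fun i => sInf (cls P k i)

noncomputable def Qred (P : Finset ℕ) : Finset ℕ :=
  ((P.erase (mP P)).image (fun p => p - mP P)) ∪ {mP P}

def HasPeriodF {A : Type*} (w : ℕ → A) (n p : ℕ) : Prop :=
  ∀ i, i + p < n → w i = w (i + p)

private lemma fw_chain {R : ℕ → ℕ → Prop} {d c : ℕ}
    (step : ∀ x, x + d < c → Relation.EqvGen R x (x + d)) :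
    ∀ k x, x + d * k < c → Relation.EqvGen R x (x + d * k) := by
  intro k
  induction k with
  | zero => intro x _; simpa using Relation.EqvGen.refl x
  | succ k ih =>
      intro x h
      have e : d * (k + 1) = d * k + d := by ring
      have h1 : x + d < c := by omega
      have h2 := ih (x + d) (by omega)
      have e2 : x + d + d * k = x + d * (k + 1) := by omega
      rw [e2] at h2
      exact Relation.EqvGen.trans _ _ _ (step x h1) h2

private lemma fw_modChain {R : ℕ → ℕ → Prop} {d c : ℕ} (_hd : 0 < d)
    (step : ∀ x, x + d < c → Relation.EqvGen R x (x + d)) :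
    ∀ a b, a < c → b < c → a % d = b % d → Relation.EqvGen R a b := by
  have main : ∀ a b, a ≤ b → b < c → a % d = b % d → Relation.EqvGen R a b := by
    intro a b hab hb h
    have hdvd : d ∣ b - a := (Nat.modEq_iff_dvd' hab).mp h
    obtain ⟨k, hk⟩ := hdvd
    have hb' : b = a + d * k := by omega
    subst hb'
    exact fw_chain step k a hb
  intro a b ha hb h
  rcases le_total a b with hab | hab
  · exact main a b hab hb h
  · exact Relation.EqvGen.symm _ _ (main b a hab ha h.symm)

theorem stmt9 (P : Finset ℕ) (hP : P.Nonempty) (hpos : ∀ p ∈ P, 0 < p)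
    (n : ℕ) (hn : mP P < n) :
    ∀ i < n, FW P n i =
      if i % mP P < n - mP P then FW (Qred P) (n - mP P) (i % mP P)
      else i % mP P := by
  set m := mP P with hmdef
  set n' := n - m with hn'def
  have hmP : m ∈ P := by
    have hne : (↑P : Set ℕ).Nonempty := by exact_mod_cast hP
    exact_mod_cast Nat.sInf_mem hne
  have hm0 : 0 < m := hpos _ hmP
  have hmmin : ∀ p ∈ P, m ≤ p := fun p hp => Nat.sInf_le (by exact_mod_cast hp)
  have hmQ : m ∈ Qred P := by
    exact Finset.mem_union_right _ (Finset.mem_singleton_self _)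
  set m' := mP (Qred P) with hm'def
  have hm'Q : m' ∈ Qred P := by
    have hne : (↑(Qred P) : Set ℕ).Nonempty := ⟨m, by exact_mod_cast hmQ⟩
    exact_mod_cast Nat.sInf_mem hne
  have hQmem : ∀ q ∈ Qred P, q = m ∨ ∃ p ∈ P, m < p ∧ q = p - m := by
    intro q hq
    rcases Finset.mem_union.mp hq with hq | hq
    · obtain ⟨p, hp, hpq⟩ := Finset.mem_image.mp hq
      obtain ⟨hpne, hpP⟩ := Finset.mem_erase.mp hp
      exact Or.inr ⟨p, hpP, lt_of_le_of_ne (hmmin p hpP) (Ne.symm hpne), hpq.symm⟩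
    · exact Or.inl (Finset.mem_singleton.mp hq)
  have hm'0 : 0 < m' := by
    rcases hQmem m' hm'Q with h | ⟨p, hp, hmp, h⟩ <;> omega
  set E := Relation.EqvGen (simRel P n) with hEdef
  set F := Relation.EqvGen (simRel (Qred P) n') with hFdef
  -- basic steps
  have modstepP : ∀ x y, x < n → y < n → x % m = y % m → simRel P n x y :=
    fun x y hx hy h => ⟨hx, hy, Or.inl h⟩
  have stepP : ∀ x p, p ∈ P → x + p < n → simRel P n x (x + p) := by
    intro x p hp h
    refine ⟨by omega, h, Or.inr ⟨x, x + p, by omega, h, rfl, rfl, ?_⟩⟩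
    have e : max x (x + p) - min x (x + p) = p := by omega
    rwa [e]
  have stepQ : ∀ x q, q ∈ Qred P → x + q < n' → simRel (Qred P) n' x (x + q) := by
    intro x q hq h
    refine ⟨by omega, h, Or.inr ⟨x, x + q, by omega, h, rfl, rfl, ?_⟩⟩
    have e : max x (x + q) - min x (x + q) = q := by omega
    rwa [e]
  -- chains
  have FmChain : ∀ a b, a < n' → b < n' → a % m = b % m → F a b :=
    fw_modChain hm0 (fun x hx => Relation.EqvGen.rel _ _ (stepQ x m hmQ hx))
  have Em'Chain : ∀ a b, a < n' → b < n' → a % m' = b % m' → E a b := by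
    refine fw_modChain hm'0 (fun x hx => ?_)
    rcases hQmem m' hm'Q with h | ⟨p, hp, hmp, h⟩
    · refine Relation.EqvGen.rel _ _ (modstepP x (x + m') (by omega) (by omega) ?_)
      rw [h, Nat.add_mod_right]
    · have hxp : x + p < n := by omega
      have e1 : E x (x + p) := Relation.EqvGen.rel _ _ (stepP x p hp hxp)
      have e2 : E (x + p) (x + m') := by
        refine Relation.EqvGen.rel _ _ (modstepP _ _ hxp (by omega) ?_)
        have e : x + p = (x + m') + m := by omega
        rw [e, Nat.add_mod_right]
      exact Relation.EqvGen.trans _ _ _ e1 e2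
  have qdiffE : ∀ x y, x ≤ y → y < n' → (y - x) ∈ Qred P → E x y := by
    intro x y hxy hy hq
    rcases hQmem _ hq with h | ⟨p, hp, hmp, h⟩
    · refine Relation.EqvGen.rel _ _ (modstepP x y (by omega) (by omega) ?_)
      have e : y = x + m := by omega
      rw [e, Nat.add_mod_right]
    · have hxp : x + p < n := by omega
      have e1 : E x (x + p) := Relation.EqvGen.rel _ _ (stepP x p hp hxp)
      have e2 : E (x + p) y := by
        refine Relation.EqvGen.rel _ _ (modstepP _ _ hxp (by omega) ?_)
        have e : x + p = y + m := by omega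
        rw [e, Nat.add_mod_right]
      exact Relation.EqvGen.trans _ _ _ e1 e2
  have qdiffE' : ∀ x y, x < n' → y < n' → (max x y - min x y) ∈ Qred P → E x y := by
    intro x y hx hy hq
    rcases le_total x y with h | h
    · have e : max x y - min x y = y - x := by omega
      exact qdiffE x y h hy (e ▸ hq)
    · have e : max x y - min x y = x - y := by omega
      exact Relation.EqvGen.symm _ _ (qdiffE y x h hx (e ▸ hq))
  -- forward embedding
  have fwd : ∀ a b, F a b → E a b := by
    intro a b h
    induction h with
    | rel a b hr =>
        obtain ⟨ha, hb, h | ⟨a', b', ha', hb', haa, hbb, hD⟩⟩ := hr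
        · exact Em'Chain a b ha hb h
        · exact Relation.EqvGen.trans _ _ _ (Em'Chain a a' ha ha' haa.symm)
            (Relation.EqvGen.trans _ _ _ (qdiffE' a' b' ha' hb' hD)
              (Em'Chain b' b hb' hb hbb))
    | refl a => exact Relation.EqvGen.refl a
    | symm a b _ ih => exact Relation.EqvGen.symm _ _ ih
    | trans a b c _ _ ih1 ih2 => exact Relation.EqvGen.trans _ _ _ ih1 ih2
  -- backward: invariant G
  set G := fun a b : ℕ => a % m = b % m ∨
      (a % m < n' ∧ b % m < n' ∧ F (a % m) (b % m)) with hGdef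
  have helperP : ∀ x y, x ≤ y → y < n → (y - x) ∈ P → x % m ≠ y % m →
      x % m < n' ∧ y % m < n' ∧ F (x % m) (y % m) := by
    intro x y hxy hy hD hne
    have hDne : y - x ≠ m := by
      intro h
      apply hne
      have e : y = x + m := by omega
      rw [e, Nat.add_mod_right]
    have hDgt : m < y - x := lt_of_le_of_ne (hmmin _ hD) (Ne.symm hDne)
    have hq : (y - x) - m ∈ Qred P :=
      Finset.mem_union_left _ (Finset.mem_image_of_mem _ (Finset.mem_erase.mpr ⟨hDne, hD⟩))
    set q := (y - x) - m with hqdef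
    have hxq : x + q < n' := by omega
    have hx' : x < n' := by omega
    have hxm : x % m < n' := lt_of_le_of_lt (Nat.mod_le x m) hx'
    have hym : y % m = (x + q) % m := by
      have e : y = (x + q) + m := by omega
      rw [e, Nat.add_mod_right]
    have hym' : y % m < n' := by
      rw [hym]; exact lt_of_le_of_lt (Nat.mod_le _ m) hxq
    refine ⟨hxm, hym', ?_⟩
    have f1 : F (x % m) x := FmChain _ _ hxm hx' (by simp [Nat.mod_mod_of_dvd])
    have f2 : F x (x + q) := Relation.EqvGen.rel _ _ (stepQ x q hq hxq)
    have f3 : F (x + q) (y % m) := by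
      refine FmChain _ _ hxq hym' ?_
      rw [hym]
      simp [Nat.mod_mod_of_dvd]
    exact Relation.EqvGen.trans _ _ _ f1 (Relation.EqvGen.trans _ _ _ f2 f3)
  have bwd : ∀ a b, E a b → G a b := by
    intro a b h
    induction h with
    | rel a b hr =>
        obtain ⟨ha, hb, h | ⟨a', b', ha', hb', haa, hbb, hD⟩⟩ := hr
        · exact Or.inl h
        · by_cases heq : a' % m = b' % m
          · exact Or.inl (haa.symm.trans (heq.trans hbb))
          · rcases le_total a' b' with hle | hle
            · have e : max a' b' - min a' b' = b' - a' := by omega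
              obtain ⟨h1, h2, h3⟩ := helperP a' b' hle hb' (e ▸ hD) heq
              right
              rw [← haa, ← hbb]
              exact ⟨h1, h2, h3⟩
            · have e : max a' b' - min a' b' = a' - b' := by omega
              obtain ⟨h1, h2, h3⟩ := helperP b' a' hle ha' (e ▸ hD) (Ne.symm heq)
              right
              rw [← haa, ← hbb]
              exact ⟨h2, h1, Relation.EqvGen.symm _ _ h3⟩
    | refl a => exact Or.inl rfl
    | symm a b _ ih =>
        rcases ih with h | ⟨h1, h2, h3⟩
        · exact Or.inl h.symm
        · exact Or.inr ⟨h2, h1, Relation.EqvGen.symm _ _ h3⟩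
    | trans a b c _ _ ih1 ih2 =>
        rcases ih1 with h1 | ⟨h1a, h1b, h1f⟩ <;> rcases ih2 with h2 | ⟨h2a, h2b, h2f⟩
        · exact Or.inl (h1.trans h2)
        · refine Or.inr ⟨?_, h2b, ?_⟩
          · rw [h1]; exact h2a
          · rw [h1]; exact h2f
        · refine Or.inr ⟨h1a, ?_, ?_⟩
          · rw [← h2]; exact h1b
          · rw [← h2]; exact h1f
        · exact Or.inr ⟨h1a, h2b, Relation.EqvGen.trans _ _ _ h1f h2f⟩
  -- final assembly
  intro i hi
  have hclsPne : (cls P n i).Nonempty := ⟨i, Relation.EqvGen.refl i⟩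
  have hEj1 : Relation.EqvGen (simRel P n) i (sInf (cls P n i)) := Nat.sInf_mem hclsPne
  have hGj1 : G i (sInf (cls P n i)) := bwd _ _ hEj1
  show sInf (cls P n i) = _
  rcases lt_or_ge (i % m) n' with hr | hr
  · rw [if_pos hr]
    have hrn : i % m < n := by omega
    have hEir : E i (i % m) :=
      Relation.EqvGen.rel _ _ (modstepP i (i % m) hi hrn (by simp [Nat.mod_mod_of_dvd]))
    have hclsQne : (cls (Qred P) n' (i % m)).Nonempty :=
      ⟨i % m, Relation.EqvGen.refl _⟩
    show sInf (cls P n i) = sInf (cls (Qred P) n' (i % m))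
    apply le_antisymm
    · have hj0 : Relation.EqvGen (simRel (Qred P) n') (i % m)
          (sInf (cls (Qred P) n' (i % m))) := Nat.sInf_mem hclsQne
      exact Nat.sInf_le (Relation.EqvGen.trans _ _ _ hEir (fwd _ _ hj0))
    · rcases hGj1 with h | ⟨_, _, h3⟩
      · have hrQ : (i % m) ∈ cls (Qred P) n' (i % m) := Relation.EqvGen.refl _
        calc sInf (cls (Qred P) n' (i % m)) ≤ i % m := Nat.sInf_le hrQ
          _ = sInf (cls P n i) % m := h
          _ ≤ sInf (cls P n i) := Nat.mod_le _ _
      · calc sInf (cls (Qred P) n' (i % m)) ≤ sInf (cls P n i) % m := Nat.sInf_le h3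
          _ ≤ sInf (cls P n i) := Nat.mod_le _ _
  · rw [if_neg (not_lt.mpr hr)]
    apply le_antisymm
    · refine Nat.sInf_le (Relation.EqvGen.rel _ _ (modstepP i (i % m) hi ((Nat.mod_lt i hm0).trans hn) ?_))
      simp [Nat.mod_mod_of_dvd]
    · rcases hGj1 with h | ⟨h1, _, _⟩
      · calc i % m = sInf (cls P n i) % m := h
          _ ≤ sInf (cls P n i) := Nat.mod_le _ _
      · omega
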